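/- Let $0<p<u<\infty$. Then there is a constant $C>0$ such that for every complex sequence $\lambda=\{\lambda_k\}_{k\in\mathbb{Z}^d}$ in the weak Lorentz space $\ell_{u,\infty}(\mathbb{Z}^d)$ one has $\|\lambda\,|\,m_{u,p}\| \le C\,\|\lambda\,|\,\ell_{u,\infty}\|$; in particular $\ell_{u,\infty}(\mathbb{Z}^d)\hookrightarrow m_{u,p}(\mathbb{Z}^d)$ continuously. -/

import Mathlib

open scoped ENNReal NNReal BigOperators
open Filter

/-- The unit cube `Q_{0,k}` is contained in the dyadic cube `Q_{-j,m}` of side length `2^j`. -/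
def inDyadic (d j : ℕ) (m k : Fin d → ℤ) : Prop :=
  ∀ i, 2 ^ j * m i ≤ k i ∧ k i < 2 ^ j * (m i + 1)

/-- The Morrey sequence space quasi-norm `‖λ | m_{u,p}(ℤ^d)‖`, with values in `ℝ≥0∞`. -/
noncomputable def morreyNorm (d : ℕ) (u p : ℝ) (lam : (Fin d → ℤ) → ℂ) : ℝ≥0∞ :=
  ⨆ (j : ℕ) (m : Fin d → ℤ),
    ((2 : ℝ≥0∞) ^ (j * d)) ^ (1 / u - 1 / p) *
      (∑' k : {k : Fin d → ℤ // inDyadic d j m k}, (‖lam k.1‖₊ : ℝ≥0∞) ^ p) ^ (1 / p)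

/-- The `ℓ_r(ℤ^d)` norm. -/
noncomputable def lpNorm (d : ℕ) (r : ℝ) (lam : (Fin d → ℤ) → ℂ) : ℝ≥0∞ :=
  (∑' k : Fin d → ℤ, (‖lam k‖₊ : ℝ≥0∞) ^ r) ^ (1 / r)

/-- The `ℓ_∞(ℤ^d)` norm. -/
noncomputable def lInftyNorm (d : ℕ) (lam : (Fin d → ℤ) → ℂ) : ℝ≥0∞ :=
  ⨆ k : Fin d → ℤ, (‖lam k‖₊ : ℝ≥0∞)

/-- The weak Lorentz `ℓ_{u,∞}(ℤ^d)` norm, via the distribution function. -/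
noncomputable def weakNorm (d : ℕ) (u : ℝ) (lam : (Fin d → ℤ) → ℂ) : ℝ≥0∞ :=
  ⨆ t : ℝ≥0, (t : ℝ≥0∞) *
    (∑' _ : {k : Fin d → ℤ // (t : ℝ) < ‖lam k‖}, (1 : ℝ≥0∞)) ^ (1 / u)

/-- The norm of the level-`j` space `X^{(j)}_{u,p}(ℤ^d)`. -/
noncomputable def XjNorm (d : ℕ) (u p p' : ℝ) (j : ℕ) (lam : (Fin d → ℤ) → ℂ) : ℝ≥0∞ :=
  ((2 : ℝ≥0∞) ^ (j * d)) ^ (1 / p - 1 / u) *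
    ∑' m : Fin d → ℤ,
      (∑' k : {k : Fin d → ℤ // inDyadic d j m k}, (‖lam k.1‖₊ : ℝ≥0∞) ^ p') ^ (1 / p')

/-- The norm of `X_{u,p}(ℤ^d)`: infimum over decompositions `λ = ∑_j λ^{(j)}`. -/
noncomputable def XupNorm (d : ℕ) (u p p' : ℝ) (lam : (Fin d → ℤ) → ℂ) : ℝ≥0∞ :=
  ⨅ (L : ℕ → (Fin d → ℤ) → ℂ) (_ : ∀ k, HasSum (fun j => L j k) (lam k)),
    ∑' j : ℕ, XjNorm d u p p' j (L j)

/-- Membership in `m_{u,p}(ℤ^d)`. -/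
def MemMorrey (d : ℕ) (u p : ℝ) (lam : (Fin d → ℤ) → ℂ) : Prop :=
  morreyNorm d u p lam ≠ ⊤

/-- Membership in `m^{00}_{u,p}(ℤ^d)`, the closure of the finitely supported sequences. -/
def MemMorrey00 (d : ℕ) (u p : ℝ) (lam : (Fin d → ℤ) → ℂ) : Prop :=
  MemMorrey d u p lam ∧
    ∀ ε : ℝ≥0∞, 0 < ε → ∃ mu : (Fin d → ℤ) → ℂ,
      (Function.support mu).Finite ∧ morreyNorm d u p (lam - mu) < ε

/-- `Q_{-ν,m} ⊆ Q_{-j,0}` for dyadic cubes. -/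
def subCube (d j ν : ℕ) (m : Fin d → ℤ) : Prop :=
  ν ≤ j ∧ ∀ i, 0 ≤ m i ∧ 2 ^ ν * (m i + 1) ≤ 2 ^ j

/-- Norm of the finite-dimensional Morrey space `m^{2^{jd}}_{u,p}` on the cube `Q_{-j,0}`. -/
noncomputable def finMorreyNorm (d : ℕ) (u p : ℝ) (j : ℕ) (lam : (Fin d → ℤ) → ℂ) : ℝ≥0∞ :=
  ⨆ (ν : ℕ) (m : Fin d → ℤ) (_ : subCube d j ν m),
    ((2 : ℝ≥0∞) ^ (ν * d)) ^ (1 / u - 1 / p) *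
      (∑' k : {k : Fin d → ℤ // inDyadic d ν m k}, (‖lam k.1‖₊ : ℝ≥0∞) ^ p) ^ (1 / p)

/-- Operator norm of `id_j : m^{2^{jd}}_{u₁,p₁} → m^{2^{jd}}_{u₂,p₂}`. -/
noncomputable def morreyOpNorm (d : ℕ) (u₁ p₁ u₂ p₂ : ℝ) (j : ℕ) : ℝ≥0∞ :=
  ⨆ (lam : (Fin d → ℤ) → ℂ) (_ : finMorreyNorm d u₁ p₁ j lam ≤ 1),
    finMorreyNorm d u₂ p₂ j lam


section WLMaux

lemma wlm_cube_count (d j : ℕ) (m : Fin d → ℤ) :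
    ∑' _ : {k : Fin d → ℤ // inDyadic d j m k}, (1 : ℝ≥0∞) ≤ (2:ℝ≥0∞) ^ (j * d) := by
  have hinj : Function.Injective
      (fun k : {k : Fin d → ℤ // inDyadic d j m k} => fun i : Fin d =>
        (⟨(k.1 i - 2 ^ j * m i).toNat, by
            have h := k.2 i
            refine (Int.toNat_lt' (by positivity)).mpr ?_
            push_cast
            linarith [h.2]⟩ : Fin (2 ^ j))) := by
    intro k k' hkk
    refine Subtype.ext (funext fun i => ?_)
    have h1 := (k.2 i).1
    have h2 := (k'.2 i).1
    have e := congrFun hkk i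
    simp only [Fin.mk.injEq] at e
    omega
  calc ∑' _ : {k : Fin d → ℤ // inDyadic d j m k}, (1:ℝ≥0∞)
      ≤ ∑' _ : Fin d → Fin (2 ^ j), (1:ℝ≥0∞) :=
        ENNReal.tsum_comp_le_tsum_of_injective hinj (fun _ => 1)
    _ = (2:ℝ≥0∞) ^ (j * d) := by
        rw [tsum_fintype]
        simp [Finset.card_univ, Fintype.card_fun, ← pow_mul, mul_comm d j]

lemma wlm_pointwise {p : ℝ} (hp : 0 < p) (a T : ℝ≥0) (hT : 0 < T) :
    (a:ℝ≥0∞)^p ≤ (T:ℝ≥0∞)^p +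
      (2:ℝ≥0∞)^p * ∑' n : ℕ, (if 2^n * T < a then ((2^n * T : ℝ≥0) : ℝ≥0∞)^p else 0) := by
  rcases le_or_gt a T with h | h
  · exact le_add_right (ENNReal.rpow_le_rpow (by exact_mod_cast h) hp.le)
  · have hex : ∃ n : ℕ, a ≤ 2 ^ n * T := by
      obtain ⟨n, hn⟩ := pow_unbounded_of_one_lt (a / T) (one_lt_two (α := ℝ≥0))
      refine ⟨n, le_of_lt ?_⟩
      rw [div_lt_iff₀ hT] at hn
      exact hn
    have hN0 : Nat.find hex ≠ 0 := by
      intro h0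
      have := Nat.find_spec hex
      rw [h0] at this
      simp at this
      exact absurd this h.not_ge
    obtain ⟨N', hN'⟩ : ∃ N', Nat.find hex = N' + 1 := ⟨Nat.find hex - 1, by omega⟩
    have hspec : a ≤ 2 ^ (N' + 1) * T := hN' ▸ Nat.find_spec hex
    have hlt : 2 ^ N' * T < a := by
      by_contra hc
      exact absurd (not_lt.mp hc) (Nat.find_min hex (by rw [hN']; omega))
    calc (a:ℝ≥0∞)^p ≤ ((2 ^ (N' + 1) * T : ℝ≥0):ℝ≥0∞)^p :=
          ENNReal.rpow_le_rpow (by exact_mod_cast hspec) hp.le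
      _ = (2:ℝ≥0∞)^p * ((2 ^ N' * T : ℝ≥0):ℝ≥0∞)^p := by
          rw [← ENNReal.mul_rpow_of_nonneg _ _ hp.le]
          congr 1
          push_cast
          ring
      _ ≤ (2:ℝ≥0∞)^p * ∑' n : ℕ, (if 2^n * T < a then ((2^n * T : ℝ≥0) : ℝ≥0∞)^p else 0) := by
          gcongr
          refine le_trans ?_ (ENNReal.le_tsum N')
          rw [if_pos hlt]
      _ ≤ _ := le_add_self

lemma wlm_rpow_ne_top {x : ℝ≥0∞} (h0 : x ≠ 0) (ht : x ≠ ⊤) (y : ℝ) : x ^ y ≠ ⊤ := by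
  simp [ENNReal.rpow_eq_top_iff, h0, ht]

lemma wlm_rpow_ne_zero {x : ℝ≥0∞} (h0 : x ≠ 0) (ht : x ≠ ⊤) (y : ℝ) : x ^ y ≠ 0 := by
  simp [ENNReal.rpow_eq_zero_iff, h0, ht]

lemma wlm_pow_rpow (x : ℝ) (n : ℕ) : ((2:ℝ≥0∞)^n)^x = ((2:ℝ≥0∞)^x)^n := by
  rw [← ENNReal.rpow_natCast 2 n, ← ENNReal.rpow_mul, ← ENNReal.rpow_natCast ((2:ℝ≥0∞)^x) n,
    ← ENNReal.rpow_mul, mul_comm]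

lemma wlm_dist {d : ℕ} {u : ℝ} (hu : 0 < u) (lam : (Fin d → ℤ) → ℂ) (t : ℝ≥0) (ht : t ≠ 0) :
    (∑' _ : ↑{k : Fin d → ℤ | t < ‖lam k‖₊}, (1:ℝ≥0∞)) ≤ (weakNorm d u lam / t) ^ u := by
  have hsets : {k : Fin d → ℤ | t < ‖lam k‖₊} = {k : Fin d → ℤ | (t:ℝ) < ‖lam k‖} := by
    ext k
    simp [← coe_nnnorm, NNReal.coe_lt_coe]
  rw [hsets]
  have h1 : (t:ℝ≥0∞) *
      (∑' _ : ↑{k : Fin d → ℤ | (t:ℝ) < ‖lam k‖}, (1:ℝ≥0∞)) ^ (1/u) ≤ weakNorm d u lam :=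
    le_iSup (fun t : ℝ≥0 =>
      (t : ℝ≥0∞) * (∑' _ : {k : Fin d → ℤ // (t : ℝ) < ‖lam k‖}, (1 : ℝ≥0∞)) ^ (1 / u)) t
  have h2 : (∑' _ : ↑{k : Fin d → ℤ | (t:ℝ) < ‖lam k‖}, (1:ℝ≥0∞)) ^ (1/u)
      ≤ weakNorm d u lam / t := by
    refine (ENNReal.le_div_iff_mul_le (Or.inl (by exact_mod_cast ht))
      (Or.inl ENNReal.coe_ne_top)).mpr ?_
    rw [mul_comm]
    exact h1
  calc (∑' _ : ↑{k : Fin d → ℤ | (t:ℝ) < ‖lam k‖}, (1:ℝ≥0∞))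
      = ((∑' _ : ↑{k : Fin d → ℤ | (t:ℝ) < ‖lam k‖}, (1:ℝ≥0∞)) ^ (1/u)) ^ u := by
        rw [← ENNReal.rpow_mul, one_div_mul_cancel hu.ne', ENNReal.rpow_one]
    _ ≤ (weakNorm d u lam / t) ^ u := ENNReal.rpow_le_rpow h2 hu.le

lemma wlm_indicator_sum {d : ℕ} (lam : (Fin d → ℤ) → ℂ) (t : ℝ≥0) (c : ℝ≥0∞) :
    (∑' k : Fin d → ℤ, (if t < ‖lam k‖₊ then c else 0))
      = c * ∑' _ : ↑{k : Fin d → ℤ | t < ‖lam k‖₊}, (1:ℝ≥0∞) := by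
  calc (∑' k : Fin d → ℤ, (if t < ‖lam k‖₊ then c else 0))
      = ∑' k : Fin d → ℤ, Set.indicator {k : Fin d → ℤ | t < ‖lam k‖₊} (fun _ => c) k := by
        congr 1
    _ = ∑' _ : ↑{k : Fin d → ℤ | t < ‖lam k‖₊}, c :=
        (tsum_subtype {k : Fin d → ℤ | t < ‖lam k‖₊} (fun _ => c)).symm
    _ = c * ∑' _ : ↑{k : Fin d → ℤ | t < ‖lam k‖₊}, (1:ℝ≥0∞) := by
        rw [← ENNReal.tsum_mul_left]
        simp

lemma wlm_level_calc {p u : ℝ} (hu : 0 < u) (W : ℝ≥0∞) (T : ℝ≥0) (hT : T ≠ 0) (n : ℕ) :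
    ((2^n * T : ℝ≥0):ℝ≥0∞)^p * (W / ((2^n * T : ℝ≥0):ℝ≥0∞))^u
      = W^u * (T:ℝ≥0∞)^(p-u) * ((2:ℝ≥0∞)^(p-u))^n := by
  have htne : ((2^n * T : ℝ≥0):ℝ≥0∞) ≠ 0 := by
    simp only [ne_eq, ENNReal.coe_eq_zero]
    positivity
  calc ((2^n * T : ℝ≥0):ℝ≥0∞)^p * (W / ((2^n * T : ℝ≥0):ℝ≥0∞))^u
      = ((2^n * T : ℝ≥0):ℝ≥0∞)^p *
          (W^u * ((2^n * T : ℝ≥0):ℝ≥0∞)^(-u)) := by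
        rw [ENNReal.div_rpow_of_nonneg _ _ hu.le, ENNReal.rpow_neg, div_eq_mul_inv]
    _ = W^u * (((2^n * T : ℝ≥0):ℝ≥0∞)^p * ((2^n * T : ℝ≥0):ℝ≥0∞)^(-u)) := by
        ring
    _ = W^u * ((2^n * T : ℝ≥0):ℝ≥0∞)^(p-u) := by
        rw [← ENNReal.rpow_add _ _ htne ENNReal.coe_ne_top]
        norm_num [sub_eq_add_neg]
    _ = W^u * (((2:ℝ≥0∞)^n)^(p-u) * (T:ℝ≥0∞)^(p-u)) := by
        congr 1
        push_cast
        rw [ENNReal.mul_rpow_of_ne_top (ENNReal.pow_ne_top ENNReal.ofNat_ne_top)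
          ENNReal.coe_ne_top]
    _ = W^u * (T:ℝ≥0∞)^(p-u) * ((2:ℝ≥0∞)^(p-u))^n := by
        rw [wlm_pow_rpow]
        ring

end WLMaux

theorem weak_lorentz_embeds_morrey (d : ℕ) (u p : ℝ) (hp : 0 < p) (hpu : p < u) :
    ∃ C : ℝ≥0, 0 < C ∧
      (∀ lam : (Fin d → ℤ) → ℂ, morreyNorm d u p lam ≤ (C : ℝ≥0∞) * weakNorm d u lam) ∧
      {lam : (Fin d → ℤ) → ℂ | weakNorm d u lam ≠ ⊤} ⊆
        {lam : (Fin d → ℤ) → ℂ | morreyNorm d u p lam ≠ ⊤} := by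
  have hu : 0 < u := hp.trans hpu
  set r : ℝ≥0∞ := (2:ℝ≥0∞) ^ (p - u) with hr
  have hrlt : r < 1 :=
    ENNReal.rpow_lt_one_of_one_lt_of_neg (by norm_num) (by linarith)
  have hrinv : (1 - r)⁻¹ ≠ ⊤ :=
    ENNReal.inv_ne_top.mpr (by simp [tsub_eq_zero_iff_le, hrlt.not_ge])
  set C₀ : ℝ≥0∞ := 1 + (2:ℝ≥0∞)^p * (1 - r)⁻¹ with hC₀
  have h2pt : (2:ℝ≥0∞)^p ≠ ⊤ := wlm_rpow_ne_top (by norm_num) (by norm_num) p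
  have hC₀t : C₀ ≠ ⊤ := by
    rw [hC₀]
    exact ENNReal.add_ne_top.mpr ⟨ENNReal.one_ne_top, ENNReal.mul_ne_top h2pt hrinv⟩
  have hC₀0 : C₀ ≠ 0 := by
    rw [hC₀]
    intro h
    rw [add_eq_zero] at h
    exact one_ne_zero h.1
  have hCt : C₀ ^ (1/p) ≠ ⊤ := wlm_rpow_ne_top hC₀0 hC₀t _
  have hC0 : C₀ ^ (1/p) ≠ 0 := wlm_rpow_ne_zero hC₀0 hC₀t _
  have hcoe : ((C₀ ^ (1/p)).toNNReal : ℝ≥0∞) = C₀ ^ (1/p) := ENNReal.coe_toNNReal hCt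
  have main : ∀ lam : (Fin d → ℤ) → ℂ,
      morreyNorm d u p lam ≤ C₀ ^ (1/p) * weakNorm d u lam := by
    intro lam
    set W : ℝ≥0∞ := weakNorm d u lam with hW
    rcases eq_or_ne W ⊤ with hWt | hWt
    · rw [hWt, ENNReal.mul_top hC0]
      exact le_top
    rcases eq_or_ne W 0 with hW0 | hW0
    · -- lam is identically zero
      have hz : ∀ k, lam k = 0 := by
        intro k
        by_contra hk
        have hn0 : (0:ℝ) < ‖lam k‖ := norm_pos_iff.mpr hk
        set t : ℝ≥0 := ‖lam k‖₊ / 2 with htdef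
        have ht0 : t ≠ 0 := by
          simp only [htdef, ne_eq, div_eq_zero_iff]
          push_neg
          constructor
          · simpa using hk
          · norm_num
        have hmem : (t:ℝ) < ‖lam k‖ := by
          have : (t:ℝ) = ‖lam k‖ / 2 := by
            rw [htdef]
            push_cast [coe_nnnorm]
            ring
          rw [this]
          linarith
        have h1 : (1:ℝ≥0∞) ≤ ∑' _ : {k' : Fin d → ℤ // (t:ℝ) < ‖lam k'‖}, (1:ℝ≥0∞) :=
          ENNReal.le_tsum (⟨k, hmem⟩ : {k' : Fin d → ℤ // (t:ℝ) < ‖lam k'‖})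
        have h2 : (t:ℝ≥0∞) * (∑' _ : {k' : Fin d → ℤ // (t:ℝ) < ‖lam k'‖}, (1:ℝ≥0∞)) ^ (1/u)
            ≤ W := le_iSup (fun t : ℝ≥0 =>
          (t : ℝ≥0∞) * (∑' _ : {k : Fin d → ℤ // (t : ℝ) < ‖lam k‖}, (1 : ℝ≥0∞)) ^ (1 / u)) t
        rw [hW0] at h2
        have h3 : (t:ℝ≥0∞) ≤ (t:ℝ≥0∞) *
            (∑' _ : {k' : Fin d → ℤ // (t:ℝ) < ‖lam k'‖}, (1:ℝ≥0∞)) ^ (1/u) := by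
          conv_lhs => rw [← mul_one (t:ℝ≥0∞)]
          gcongr
          calc (1:ℝ≥0∞) = 1 ^ (1/u) := (ENNReal.one_rpow _).symm
            _ ≤ _ := ENNReal.rpow_le_rpow h1 (by positivity)
        have : (t:ℝ≥0∞) = 0 := le_antisymm (h3.trans h2) zero_le
        exact ht0 (by exact_mod_cast this)
      have hmz : morreyNorm d u p lam = 0 := by
        rw [morreyNorm]
        simp only [hz, nnnorm_zero, ENNReal.coe_zero, ENNReal.zero_rpow_of_pos hp,
          tsum_zero, ENNReal.zero_rpow_of_pos (by positivity : (0:ℝ) < 1/p), mul_zero]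
        simp
      rw [hmz]
      exact zero_le
    · -- main case : 0 < W < ⊤
      rw [morreyNorm]
      refine iSup_le fun j => iSup_le fun m => ?_
      set N : ℝ≥0∞ := (2:ℝ≥0∞) ^ (j * d) with hN
      have hN0 : N ≠ 0 := by
        rw [hN]
        positivity
      have hNt : N ≠ ⊤ := by
        rw [hN]
        exact ENNReal.pow_ne_top ENNReal.ofNat_ne_top
      set NN : ℝ≥0 := (2:ℝ≥0) ^ (j * d) with hNN
      have hNNc : ((NN:ℝ≥0∞)) = N := by
        rw [hNN, hN]
        push_cast
        rfl
      set T : ℝ≥0 := W.toNNReal * NN ^ (-(1/u)) with hT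
      have hT0 : 0 < T := by
        apply mul_pos
        · exact ENNReal.toNNReal_pos hW0 hWt
        · exact NNReal.rpow_pos (by positivity)
      have hTco : (T:ℝ≥0∞) = W * N ^ (-(1/u)) := by
        rw [hT, ENNReal.coe_mul, ENNReal.coe_rpow_of_ne_zero (by positivity),
          ENNReal.coe_toNNReal hWt, hNNc]
      have hTne : (T:ℝ≥0∞) ≠ 0 := by exact_mod_cast hT0.ne'
      -- the distributional bound for each level
      have hlevel : ∀ n : ℕ,
          (∑' k : Fin d → ℤ,
            (if 2^n * T < ‖lam k‖₊ then ((2^n * T : ℝ≥0) : ℝ≥0∞)^p else 0))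
          ≤ W^u * (T:ℝ≥0∞)^(p-u) * r^n := by
        intro n
        have ht0 : (2^n * T : ℝ≥0) ≠ 0 := by positivity
        rw [wlm_indicator_sum lam (2^n * T) (((2^n * T : ℝ≥0) : ℝ≥0∞)^p)]
        calc ((2^n * T : ℝ≥0) : ℝ≥0∞)^p *
              ∑' _ : ↑{k : Fin d → ℤ | 2^n * T < ‖lam k‖₊}, (1:ℝ≥0∞)
            ≤ ((2^n * T : ℝ≥0) : ℝ≥0∞)^p * (W / ((2^n * T : ℝ≥0):ℝ≥0∞))^u := by
              gcongr
              exact wlm_dist hu lam (2^n * T) ht0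
          _ = W^u * (T:ℝ≥0∞)^(p-u) * r^n := by
              rw [wlm_level_calc hu W T hT0.ne' n, hr]
      -- the summed bound
      have hpne : p ≠ 0 := hp.ne'
      have hune : u ≠ 0 := hu.ne'
      have key1 : N * (T:ℝ≥0∞)^p = W^p * N^(1 - p/u) := by
        rw [hTco, ENNReal.mul_rpow_of_ne_top hWt (wlm_rpow_ne_top hN0 hNt _),
          ← ENNReal.rpow_mul]
        rw [← mul_assoc, mul_comm N, mul_assoc]
        congr 1
        nth_rewrite 1 [← ENNReal.rpow_one N]
        rw [← ENNReal.rpow_add _ _ hN0 hNt]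
        congr 1
        field_simp
        try ring
      have key2 : W^u * (T:ℝ≥0∞)^(p-u) = W^p * N^(1 - p/u) := by
        rw [hTco, ENNReal.mul_rpow_of_ne_top hWt (wlm_rpow_ne_top hN0 hNt _),
          ← ENNReal.rpow_mul, ← mul_assoc, ← ENNReal.rpow_add _ _ hW0 hWt]
        rw [show u + (p - u) = p from by ring]
        rw [show (-(1/u)) * (p - u) = 1 - p/u from by field_simp; try ring]
      have hsum : (∑' k : {k : Fin d → ℤ // inDyadic d j m k}, (‖lam k.1‖₊ : ℝ≥0∞) ^ p)
          ≤ C₀ * (W^p * N^(1 - p/u)) := by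
        calc (∑' k : {k : Fin d → ℤ // inDyadic d j m k}, (‖lam k.1‖₊ : ℝ≥0∞) ^ p)
            ≤ ∑' k : {k : Fin d → ℤ // inDyadic d j m k},
                ((T:ℝ≥0∞)^p + (2:ℝ≥0∞)^p *
                  ∑' n : ℕ, (if 2^n * T < ‖lam k.1‖₊
                    then ((2^n * T : ℝ≥0) : ℝ≥0∞)^p else 0)) :=
              ENNReal.tsum_le_tsum fun k => wlm_pointwise hp _ T hT0
          _ = (∑' _ : {k : Fin d → ℤ // inDyadic d j m k}, (1:ℝ≥0∞)) * (T:ℝ≥0∞)^p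
              + (2:ℝ≥0∞)^p * ∑' k : {k : Fin d → ℤ // inDyadic d j m k},
                  ∑' n : ℕ, (if 2^n * T < ‖lam k.1‖₊
                    then ((2^n * T : ℝ≥0) : ℝ≥0∞)^p else 0) := by
              rw [ENNReal.tsum_add, ENNReal.tsum_mul_left, ← ENNReal.tsum_mul_right]
              simp
          _ ≤ N * (T:ℝ≥0∞)^p + (2:ℝ≥0∞)^p *
                ((W^u * (T:ℝ≥0∞)^(p-u)) * (1 - r)⁻¹) := by
              gcongr
              · exact wlm_cube_count d j m
              · rw [ENNReal.tsum_comm]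
                calc ∑' (n : ℕ) (k : {k : Fin d → ℤ // inDyadic d j m k}),
                      (if 2^n * T < ‖lam k.1‖₊
                        then ((2^n * T : ℝ≥0) : ℝ≥0∞)^p else 0)
                    ≤ ∑' n : ℕ, W^u * (T:ℝ≥0∞)^(p-u) * r^n := by
                      refine ENNReal.tsum_le_tsum fun n => ?_
                      refine le_trans (ENNReal.tsum_comp_le_tsum_of_injective
                        Subtype.val_injective fun k =>
                          (if 2^n * T < ‖lam k‖₊
                            then ((2^n * T : ℝ≥0) : ℝ≥0∞)^p else 0)) ?_
                      exact hlevel n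
                  _ = (W^u * (T:ℝ≥0∞)^(p-u)) * (1 - r)⁻¹ := by
                      rw [ENNReal.tsum_mul_left, ENNReal.tsum_geometric]
          _ = C₀ * (W^p * N^(1 - p/u)) := by
              rw [key1, key2, hC₀]
              ring
      -- conclude
      calc N ^ (1/u - 1/p) *
            (∑' k : {k : Fin d → ℤ // inDyadic d j m k}, (‖lam k.1‖₊ : ℝ≥0∞) ^ p) ^ (1/p)
          ≤ N ^ (1/u - 1/p) * (C₀ * (W^p * N^(1 - p/u))) ^ (1/p) :=
            mul_le_mul_right (ENNReal.rpow_le_rpow hsum (by positivity)) _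
        _ = C₀ ^ (1/p) * W := by
            rw [ENNReal.mul_rpow_of_nonneg _ _ (by positivity),
              ENNReal.mul_rpow_of_nonneg _ _ (by positivity),
              ← ENNReal.rpow_mul W, mul_one_div_cancel hp.ne', ENNReal.rpow_one,
              ← ENNReal.rpow_mul N]
            rw [show (1 - p/u) * (1/p) = -(1/u - 1/p) from by field_simp; try ring]
            rw [ENNReal.rpow_neg]
            calc N ^ (1/u - 1/p) * (C₀ ^ (1/p) * (W * (N ^ (1/u - 1/p))⁻¹))
                = (N ^ (1/u - 1/p) * (N ^ (1/u - 1/p))⁻¹) * (C₀ ^ (1/p) * W) := by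
                  ring
              _ = C₀ ^ (1/p) * W := by
                  rw [ENNReal.mul_inv_cancel (wlm_rpow_ne_zero hN0 hNt _)
                    (wlm_rpow_ne_top hN0 hNt _), one_mul]
  refine ⟨(C₀ ^ (1/p)).toNNReal, ?_, ?_, ?_⟩
  · exact ENNReal.toNNReal_pos hC0 hCt
  · intro lam
    rw [hcoe]
    exact main lam
  · intro lam hlam
    simp only [Set.mem_setOf_eq] at hlam ⊢
    exact ne_top_of_le_ne_top (ENNReal.mul_ne_top hCt hlam) (main lam)
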